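/- The Atangana–Baleanu kernel fails the singularity condition: for 0 < α < 1, τ > 0, M > 0, define ψ(s) = M·s^{α−1}/((1−α)·sᵅ + α·τ^{−α}) for s > 0. Then (s·ψ(s))⁻¹ tends to (1−α)/M as s → ∞; in particular, since (1−α)/M ≠ 0, the necessary condition lim_{s→∞} (s·ψ(s))⁻¹ = 0 holds only in the limit α = 1. -/

import Mathlib

open Filter Real

/-- The Atangana–Baleanu kernel fails the singularity condition: with
`ψ s = M s^{α-1} / ((1-α) sᵅ + α τ^{-α})`, one has `(s * ψ s)⁻¹ → (1-α)/M ≠ 0`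
as `s → ∞`. -/
theorem atangana_baleanu_fails_singularity_condition
    (α τ M : ℝ) (hα0 : 0 < α) (hα1 : α < 1) (hτ : 0 < τ) (hM : 0 < M)
    (ψ : ℝ → ℝ)
    (hψ : ∀ s > (0 : ℝ), ψ s = M * s ^ (α - 1) / ((1 - α) * s ^ α + α * τ ^ (-α))) :
    Tendsto (fun s : ℝ => (s * ψ s)⁻¹) atTop (nhds ((1 - α) / M))
      ∧ (1 - α) / M ≠ 0 := by
  have h1α : 0 < 1 - α := by linarith
  constructor
  · have hlim : Tendsto (fun s : ℝ => (1 - α) / M + (α * τ ^ (-α) / M) * s ^ (-α))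
        atTop (nhds ((1 - α) / M)) := by
      have h0 : Tendsto (fun s : ℝ => s ^ (-α)) atTop (nhds 0) :=
        tendsto_rpow_neg_atTop hα0
      have := (h0.const_mul (α * τ ^ (-α) / M)).const_add ((1 - α) / M)
      simpa using this
    refine hlim.congr' ?_
    filter_upwards [eventually_gt_atTop (0 : ℝ)] with s hs
    have hsα : (0 : ℝ) < s ^ α := rpow_pos_of_pos hs α
    have hτα : (0 : ℝ) < τ ^ (-α) := rpow_pos_of_pos hτ _
    have hD : (0 : ℝ) < (1 - α) * s ^ α + α * τ ^ (-α) := by positivity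
    have hpow : s ^ (α - 1) * s = s ^ α := by
      rw [← Real.rpow_add_one hs.ne' (α - 1)]; norm_num
    rw [hψ s hs]
    field_simp
    have hinv : s ^ (-α) * s ^ α = 1 := by
      rw [← Real.rpow_add hs]; simp
    linear_combination ((1 - α) + α * τ ^ (-α) * s ^ (-α)) * hpow +
      α * τ ^ (-α) * hinv
  · exact div_ne_zero (by linarith) hM.ne'
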